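/- For every n ≥ 1 and every r with 1 ≤ r ≤ n, the number of increasing plane trees with n edges whose root has exactly r children equals the number of Stirling permutations of the multiset {1,1,2,2,...,n,n} having exactly r blocks. -/

import Mathlib

/-- A plane tree with labeled vertices: a root label together with an ordered
list of child subtrees.  (A plane tree is a rooted tree in which the children
of each node are linearly ordered.) -/
inductive LTree : Type where
  | node : ℕ → List LTree → LTree

namespace LTree

/-- The label of the root. -/
def rootLabel : LTree → ℕ
  | node a _ => a

/-- The list of child subtrees of the root. -/
def children : LTree → List LTree
  | node _ cs => cs

/-- `deg_T(root)`: the number of children of the root. -/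
def rootDeg (t : LTree) : ℕ := (children t).length

mutual
  /-- The list of all vertex labels of a tree. -/
  def labels : LTree → List ℕ
    | node a cs => a :: labelsList cs
  /-- The list of all vertex labels of a forest. -/
  def labelsList : List LTree → List ℕ
    | [] => []
    | c :: rest => labels c ++ labelsList rest
end

/-- `β(v)`: the smallest label occurring in the subtree `t` rooted at `v`. -/
def minLabel (t : LTree) : ℕ := (labels t).foldr min (rootLabel t)

/-- `min { j, β(c₁), …, β(cₖ) }` for a vertex `j` and a list of subtrees `c₁, …, cₖ`. -/
def minOver (j : ℕ) (rest : List LTree) : ℕ := (rest.map minLabel).foldr min j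

mutual
  /-- The list of edges of a tree, each recorded as a (parent label, child label)
  pair, in depth-first order. -/
  def edgeList : LTree → List (ℕ × ℕ)
    | node a cs => edgeListAux a cs
  def edgeListAux : ℕ → List LTree → List (ℕ × ℕ)
    | _, [] => []
    | a, c :: rest => (a, rootLabel c) :: (edgeList c ++ edgeListAux a rest)
end

mutual
  /-- The list of improper edges of a tree: if a vertex `j` has children
  `j₁, …, jₖ` (ordered left to right), the edge `(j, jᵢ)` is improper when
  `β(jᵢ) < min { j, β(j_{i+1}), …, β(jₖ) }`. -/
  def improperEdges : LTree → List (ℕ × ℕ)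
    | node a cs => improperEdgesAux a cs
  def improperEdgesAux : ℕ → List LTree → List (ℕ × ℕ)
    | _, [] => []
    | j, c :: rest =>
        (if minLabel c < minOver j rest then [(j, rootLabel c)] else [])
          ++ improperEdges c ++ improperEdgesAux j rest
end

mutual
  /-- The list of proper (i.e. non-improper) edges of a tree. -/
  def properEdges : LTree → List (ℕ × ℕ)
    | node a cs => properEdgesAux a cs
  def properEdgesAux : ℕ → List LTree → List (ℕ × ℕ)
    | _, [] => []
    | j, c :: rest =>
        (if minLabel c < minOver j rest then [] else [(j, rootLabel c)])
          ++ properEdges c ++ properEdgesAux j rest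
end

/-- `impr T`: the number of improper edges of `T`. -/
def impr (t : LTree) : ℕ := (improperEdges t).length

/-- `prop T`: the number of proper edges of `T`. -/
def propCount (t : LTree) : ℕ := (properEdges t).length

/-- The number of edges of `T`. -/
def edgeCount (t : LTree) : ℕ := (edgeList t).length

/-- `T` is a labeled plane tree with `n` edges: its `n + 1` vertices are labeled
bijectively with `{1, 2, …, n + 1}`. -/
def IsLPT (n : ℕ) (t : LTree) : Prop := (labels t).Perm (List.range' 1 (n + 1))

/-- `T` is increasing: vertex labels increase along every path from the root. -/
inductive Increasing : LTree → Prop where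
  | node (a : ℕ) (cs : List LTree) :
      (∀ c ∈ cs, a < rootLabel c) → (∀ c ∈ cs, Increasing c) → Increasing (node a cs)

end LTree

/-- `σ` is a Stirling permutation on the multiset `[n]₂ = {1,1,2,2,…,n,n}`: it is a
rearrangement of `[n]₂` such that for every `i`, all entries lying between the two
occurrences of `i` are greater than `i`. -/
def IsStirling (n : ℕ) (σ : List ℕ) : Prop :=
  σ.Perm (List.range' 1 n ++ List.range' 1 n) ∧
  ∀ p q r : ℕ, p < q → q < r → r < σ.length →
    σ.getD p 0 = σ.getD r 0 → σ.getD p 0 < σ.getD q 0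

/-- Position `q` starts a block of `σ`: every pair of equal entries occurring at
positions `p < r` with `p` before `q` also has `r` before `q`, i.e. `q` is not
contained in (nor is the right endpoint of) any substring `σ_p ⋯ σ_r` with
`σ_p = σ_r` starting before `q`.  Blocks are the maximal substrings with equal
endpoints; they begin exactly at such positions. -/
def IsBlockStart (σ : List ℕ) (q : ℕ) : Prop :=
  q < σ.length ∧
    ¬ ∃ p r : ℕ, p < q ∧ q ≤ r ∧ r < σ.length ∧ σ.getD p 0 = σ.getD r 0

/-- The number of blocks of a Stirling permutation `σ`. -/
noncomputable def blockCount (σ : List ℕ) : ℕ :=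
  Nat.card {q : ℕ // IsBlockStart σ q}

namespace SP


def St (σ : List ℕ) : Prop :=
  ∀ p q r : ℕ, p < q → q < r → r < σ.length →
    σ.getD p 0 = σ.getD r 0 → σ.getD p 0 < σ.getD q 0

section Glue

variable (b : ℕ) (w1 w2 : List ℕ)

local notation "L" => b :: w1 ++ b :: w2
local notation "m" => w1.length

lemma len_L : (L).length = m + 2 + w2.length := by simp; omega

lemma e0 : (L).getD 0 0 = b := rfl

lemma e1 {i : ℕ} (h : i < m) : (L).getD (i+1) 0 = w1.getD i 0 := by
  show (b :: (w1 ++ b :: w2)).getD (i+1) 0 = _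
  rw [List.getD_cons_succ, List.getD_append _ _ _ _ h]

lemma e2 : (L).getD (m+1) 0 = b := by
  show (b :: (w1 ++ b :: w2)).getD (m+1) 0 = _
  rw [List.getD_cons_succ, List.getD_append_right _ _ _ _ le_rfl]
  simp

lemma e3 (i : ℕ) : (L).getD (m+2+i) 0 = w2.getD i 0 := by
  show (b :: (w1 ++ b :: w2)).getD (m+2+i) 0 = _
  have : m + 2 + i = (m + 1 + i) + 1 := by omega
  rw [this, List.getD_cons_succ, List.getD_append_right _ _ _ _ (by omega)]
  have : m + 1 + i - m = i + 1 := by omega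
  rw [this, List.getD_cons_succ]

lemma mem_getD {l : List ℕ} {i : ℕ} (h : i < l.length) : l.getD i 0 ∈ l := by
  rw [List.getD_eq_getElem _ _ h]; exact List.getElem_mem h

end Glue


lemma ev (b : ℕ) (w1 w2 : List ℕ) : ∀ i, i < w1.length + 2 + w2.length →
    (i = 0 ∧ (b :: w1 ++ b :: w2).getD i 0 = b) ∨
    (1 ≤ i ∧ i ≤ w1.length ∧ (b :: w1 ++ b :: w2).getD i 0 = w1.getD (i-1) 0) ∨
    (i = w1.length + 1 ∧ (b :: w1 ++ b :: w2).getD i 0 = b) ∨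
    (w1.length + 2 ≤ i ∧ (b :: w1 ++ b :: w2).getD i 0 = w2.getD (i-(w1.length+2)) 0) := by
  set m := w1.length with hm
  intro i hi
  rcases Nat.lt_or_ge i 1 with h' | h'
  · left; have : i = 0 := by omega
    subst this; exact ⟨rfl, e0 b w1 w2⟩
  rcases Nat.lt_or_ge i (m+1) with h'' | h''
  · right; left
    refine ⟨h', by omega, ?_⟩
    have : i = (i-1) + 1 := by omega
    conv_lhs => rw [this]
    rw [e1 b w1 w2 (by omega)]
  rcases Nat.lt_or_ge i (m+2) with h3 | h3
  · right; right; left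
    have : i = m + 1 := by omega
    subst this; exact ⟨rfl, e2 b w1 w2⟩
  · right; right; right
    refine ⟨h3, ?_⟩
    have : i = m + 2 + (i - (m+2)) := by omega
    conv_lhs => rw [this]
    rw [e3 b w1 w2]

lemma st_glue {b : ℕ} {w1 w2 : List ℕ} (h1 : St w1) (h2 : St w2)
    (hb1 : b ∉ w1) (hb2 : b ∉ w2) (hlt : ∀ x ∈ w1, b < x)
    (hdisj : ∀ x ∈ w1, x ∉ w2) : St (b :: w1 ++ b :: w2) := by
  intro p q r hpq hqr hr heq
  set m := w1.length with hm
  rw [len_L] at hr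
  have ev := ev b w1 w2
  have hp := ev p (by omega)
  have hq := ev q (by omega)
  have hr' := ev r (by omega)
  rcases hp with ⟨hp0, ep⟩ | ⟨hpa, hpb, ep⟩ | ⟨hp0, ep⟩ | ⟨hpa, ep⟩
  · -- p = 0, value b
    subst hp0
    rw [ep] at heq ⊢
    -- r must be m+1
    rcases hr' with ⟨hr0, er⟩ | ⟨hra, hrb, er⟩ | ⟨hr0, er⟩ | ⟨hra, er⟩
    · omega
    · exfalso; rw [er] at heq
      exact hb1 (heq ▸ mem_getD (by omega))
    · -- r = m+1, q in 1..m
      subst hr0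
      rcases hq with ⟨hq0, eq'⟩ | ⟨hqa, hqb, eq'⟩ | ⟨hq0, eq'⟩ | ⟨hqa, eq'⟩
      · omega
      · rw [eq']; exact hlt _ (mem_getD (by omega))
      · omega
      · omega
    · exfalso; rw [er] at heq
      exact hb2 (heq ▸ mem_getD (by omega))
  · -- p in 1..m, value in w1
    have hpmem : (b :: w1 ++ b :: w2).getD p 0 ∈ w1 := ep ▸ mem_getD (by omega)
    rcases hr' with ⟨hr0, er⟩ | ⟨hra, hrb, er⟩ | ⟨hr0, er⟩ | ⟨hra, er⟩
    · omega
    · -- both in w1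
      rcases hq with ⟨hq0, eq'⟩ | ⟨hqa, hqb, eq'⟩ | ⟨hq0, eq'⟩ | ⟨hqa, eq'⟩
      · omega
      · rw [ep, eq']; rw [ep, er] at heq
        exact h1 (p-1) (q-1) (r-1) (by omega) (by omega) (by omega) heq
      · omega
      · omega
    · exfalso; rw [er] at heq; exact hb1 (heq ▸ hpmem)
    · exfalso; rw [er] at heq
      exact hdisj _ hpmem (heq ▸ mem_getD (by omega))
  · -- p = m+1, value b, r > m+1 so in w2
    exfalso
    rcases hr' with ⟨hr0, er⟩ | ⟨hra, hrb, er⟩ | ⟨hr0, er⟩ | ⟨hra, er⟩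
    · omega
    · omega
    · omega
    · rw [ep, er] at heq; exact hb2 (heq ▸ mem_getD (by omega))
  · -- p ≥ m+2, all in w2
    rcases hr' with ⟨hr0, er⟩ | ⟨hra, hrb, er⟩ | ⟨hr0, er⟩ | ⟨hra, er⟩
    · omega
    · omega
    · omega
    · rcases hq with ⟨hq0, eq'⟩ | ⟨hqa, hqb, eq'⟩ | ⟨hq0, eq'⟩ | ⟨hqa, eq'⟩
      · omega
      · omega
      · omega
      · rw [ep, eq']; rw [ep, er] at heq
        exact h2 (p-(m+2)) (q-(m+2)) (r-(m+2)) (by omega) (by omega) (by omega) heq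


lemma st_split {b : ℕ} {w1 w2 : List ℕ} (h : St (b :: w1 ++ b :: w2))
    (hcount : ∀ x ∈ (b :: w1 ++ b :: w2), (b :: w1 ++ b :: w2).count x = 2)
    (hb1 : b ∉ w1) :
    St w1 ∧ St w2 ∧ (∀ x ∈ w1, b < x) ∧ (∀ x ∈ w1, x ∉ w2) ∧ b ∉ w2 ∧
    (∀ x ∈ w1, w1.count x = 2) ∧ (∀ x ∈ w2, w2.count x = 2) := by
  set m := w1.length with hm
  have hlen : (b :: w1 ++ b :: w2).length = m + 2 + w2.length := len_L b w1 w2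
  have hst1 : St w1 := by
    intro p q r hpq hqr hr heq
    have := h (p+1) (q+1) (r+1) (by omega) (by omega) (by omega)
    rw [e1 b w1 w2 (i := p) (by omega), e1 b w1 w2 (i := q) (by omega),
      e1 b w1 w2 (i := r) (by omega)] at this
    exact this heq
  have hst2 : St w2 := by
    intro p q r hpq hqr hr heq
    have := h (m+2+p) (m+2+q) (m+2+r) (by omega) (by omega) (by omega)
    rw [e3 b w1 w2 p, e3 b w1 w2 q, e3 b w1 w2 r] at this
    exact this heq
  have hlt : ∀ x ∈ w1, b < x := by
    intro x hx
    obtain ⟨i, hi, hix⟩ := List.mem_iff_getElem.mp hx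
    have hgd : w1.getD i 0 = x := by rw [List.getD_eq_getElem _ _ hi, hix]
    have := h 0 (i+1) (m+1) (by omega) (by omega) (by omega)
      (by rw [e0 b w1 w2, e2 b w1 w2])
    rw [e0 b w1 w2, e1 b w1 w2 hi, hgd] at this
    exact this
  have hbw2 : b ∉ w2 := by
    have h2 := hcount b (by simp)
    have hc1 : w1.count b = 0 := List.count_eq_zero_of_not_mem hb1
    simp [List.count_cons, List.count_append, hc1] at h2
    have : w2.count b = 0 := by omega
    exact List.count_eq_zero.mp this
  have hdisj : ∀ x ∈ w1, x ∉ w2 := by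
    intro x hx1 hx2
    obtain ⟨i, hi, hix⟩ := List.mem_iff_getElem.mp hx1
    obtain ⟨k, hk, hkx⟩ := List.mem_iff_getElem.mp hx2
    have hg1 : w1.getD i 0 = x := by rw [List.getD_eq_getElem _ _ hi, hix]
    have hg2 : w2.getD k 0 = x := by rw [List.getD_eq_getElem _ _ hk, hkx]
    have := h (i+1) (m+1) (m+2+k) (by omega) (by omega) (by omega)
      (by rw [e1 b w1 w2 hi, e3 b w1 w2 k, hg1, hg2])
    rw [e1 b w1 w2 hi, e2 b w1 w2, hg1] at this
    exact absurd (hlt x hx1) (by omega)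
  refine ⟨hst1, hst2, hlt, hdisj, hbw2, ?_, ?_⟩
  · intro x hx
    have h2 := hcount x (by simp [hx])
    have hxb : ¬ (b = x) := by have := hlt x hx; omega
    have hc2 : w2.count x = 0 := List.count_eq_zero_of_not_mem (hdisj x hx)
    simp [List.count_cons, List.count_append, hc2, hxb] at h2
    omega
  · intro x hx
    have h2 := hcount x (by simp [hx])
    have hxb : ¬ (b = x) := fun h' => hbw2 (h' ▸ hx)
    have hxw1 : x ∉ w1 := fun h' => hdisj x h' hx
    have hc1 : w1.count x = 0 := List.count_eq_zero_of_not_mem hxw1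
    simp [List.count_cons, List.count_append, hc1, hxb] at h2
    omega



lemma blockStart_glue_iff {b : ℕ} {w1 w2 : List ℕ} (hb1 : b ∉ w1) (hb2 : b ∉ w2)
    (hdisj : ∀ x ∈ w1, x ∉ w2) (q : ℕ) :
    IsBlockStart (b :: w1 ++ b :: w2) q ↔
      (q = 0 ∨ (w1.length + 2 ≤ q ∧ IsBlockStart w2 (q - (w1.length + 2)))) := by
  set m := w1.length with hm
  have hlen : (b :: w1 ++ b :: w2).length = m + 2 + w2.length := len_L b w1 w2
  constructor
  · rintro ⟨hq, hno⟩
    rcases Nat.eq_zero_or_pos q with h0 | h0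
    · exact Or.inl h0
    right
    have hq2 : m + 2 ≤ q := by
      by_contra hcon
      exact hno ⟨0, m+1, by omega, by omega, by omega,
        by rw [e0 b w1 w2, e2 b w1 w2]⟩
    refine ⟨hq2, by omega, ?_⟩
    rintro ⟨p, r, h1, h2, h3, h4⟩
    refine hno ⟨m+2+p, m+2+r, by omega, by omega, by omega, ?_⟩
    rw [e3 b w1 w2 p, e3 b w1 w2 r]; exact h4
  · rintro (h0 | ⟨hq2, hbs, hno⟩)
    · subst h0
      exact ⟨by simp, by rintro ⟨p, r, h1, _⟩; omega⟩
    refine ⟨by omega, ?_⟩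
    rintro ⟨p, r, h1, h2, h3, h4⟩
    have hr2 : m + 2 ≤ r := by omega
    have her : (b :: w1 ++ b :: w2).getD r 0 = w2.getD (r - (m+2)) 0 := by
      have : r = m + 2 + (r - (m+2)) := by omega
      conv_lhs => rw [this]
      rw [e3 b w1 w2]
    have hrmem : (b :: w1 ++ b :: w2).getD r 0 ∈ w2 := by
      rw [her]; exact mem_getD (by omega)
    rcases ev b w1 w2 p (by omega) with ⟨hp0, ep⟩ | ⟨hpa, hpb, ep⟩ | ⟨hp0, ep⟩ | ⟨hpa, ep⟩
    · exact hb2 (by rw [ep] at h4; exact h4 ▸ hrmem)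
    · have : (b :: w1 ++ b :: w2).getD p 0 ∈ w1 := ep ▸ mem_getD (by omega)
      exact hdisj _ this (h4 ▸ hrmem)
    · exact hb2 (by rw [ep] at h4; exact h4 ▸ hrmem)
    · refine hno ⟨p - (m+2), r - (m+2), by omega, by omega, by omega, ?_⟩
      exact (ep.symm.trans h4).trans her
  
lemma blockCount_eq_ncard (σ : List ℕ) :
    blockCount σ = {q | IsBlockStart σ q}.ncard := by
  rw [blockCount, ← Nat.card_coe_set_eq]
  exact Nat.card_congr (Equiv.subtypeEquivRight (fun _ => Iff.rfl))

lemma blockStart_finite (σ : List ℕ) : {q | IsBlockStart σ q}.Finite :=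
  Set.Finite.subset (Set.finite_Iio σ.length) (fun q hq => hq.1)

lemma blockCount_nil : blockCount [] = 0 := by
  rw [blockCount_eq_ncard]
  convert Set.ncard_empty ℕ
  ext q
  simp only [Set.mem_setOf_eq, Set.mem_empty_iff_false, iff_false]
  rintro ⟨hq, -⟩
  simp at hq

lemma blockCount_glue {b : ℕ} {w1 w2 : List ℕ} (hb1 : b ∉ w1) (hb2 : b ∉ w2)
    (hdisj : ∀ x ∈ w1, x ∉ w2) :
    blockCount (b :: w1 ++ b :: w2) = blockCount w2 + 1 := by
  rw [blockCount_eq_ncard, blockCount_eq_ncard]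
  have hset : {q | IsBlockStart (b :: w1 ++ b :: w2) q}
      = insert 0 ((fun q => w1.length + 2 + q) '' {q | IsBlockStart w2 q}) := by
    ext q
    simp only [Set.mem_setOf_eq, Set.mem_insert_iff, Set.mem_image]
    rw [blockStart_glue_iff hb1 hb2 hdisj]
    constructor
    · rintro (h0 | ⟨hq2, hbs⟩)
      · exact Or.inl h0
      · right; exact ⟨q - (w1.length + 2), hbs, by omega⟩
    · rintro (h0 | ⟨q', hbs, rfl⟩)
      · exact Or.inl h0
      · right; refine ⟨by omega, ?_⟩
        have : w1.length + 2 + q' - (w1.length + 2) = q' := by omega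
        rw [this]; exact hbs
  have hfin : ((fun q => w1.length + 2 + q) '' {q | IsBlockStart w2 q}).Finite :=
    Set.Finite.image _ (blockStart_finite w2)
  have hnot : (0:ℕ) ∉ (fun q => w1.length + 2 + q) '' {q | IsBlockStart w2 q} := by
    rintro ⟨q', -, hq'⟩; simp at hq'
  rw [hset, Set.ncard_insert_of_notMem hnot hfin,
    Set.ncard_image_of_injective _ (fun a b h => by simpa using h)]

end SP
namespace SP
open LTree

lemma forest_rec {P : List LTree → Prop} (h0 : P [])
    (h1 : ∀ a cs rest, P cs → P rest → P (node a cs :: rest)) : ∀ cs, P cs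
  | [] => h0
  | node a cs :: rest => h1 a cs rest (forest_rec h0 h1 cs) (forest_rec h0 h1 rest)
termination_by cs => sizeOf cs

def word : List LTree → List ℕ
  | [] => []
  | node a cs :: rest => (a-1) :: (word cs ++ (a-1) :: word rest)
termination_by l => sizeOf l

def parse : List ℕ → List LTree
  | [] => []
  | b :: rest =>
      node (b+1) (parse (rest.take (rest.idxOf b)))
        :: parse (rest.drop (rest.idxOf b + 1))
termination_by l => l.length
decreasing_by
  · simp [List.length_take]
  · simp

@[simp] lemma labelsList_nil : labelsList [] = [] := rfl
@[simp] lemma labelsList_cons (c : LTree) (rest : List LTree) :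
    labelsList (c :: rest) = labels c ++ labelsList rest := by
  rw [labelsList]
@[simp] lemma labels_node (a cs) : labels (node a cs) = a :: labelsList cs := by rw [labels]
@[simp] lemma word_nil : word [] = [] := by rw [word]
@[simp] lemma word_cons (a cs rest) :
    word (node a cs :: rest) = (a-1) :: (word cs ++ (a-1) :: word rest) := by rw [word]
@[simp] lemma parse_nil : parse [] = [] := by rw [parse]
lemma parse_cons (b : ℕ) (rest : List ℕ) :
    parse (b :: rest) = node (b+1) (parse (rest.take (rest.idxOf b)))
        :: parse (rest.drop (rest.idxOf b + 1)) := by rw [parse]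
@[simp] lemma rootLabel_node (a cs) : rootLabel (node a cs) = a := rfl
@[simp] lemma children_node (a cs) : children (node a cs) = cs := rfl

lemma mem_labelsList {y : ℕ} : ∀ {cs : List LTree},
    y ∈ labelsList cs ↔ ∃ c ∈ cs, y ∈ labels c := by
  intro cs
  induction cs with
  | nil => simp
  | cons c rest ih => simp [ih]

lemma rootLabel_mem_labels (t : LTree) : rootLabel t ∈ labels t := by
  cases t with
  | node a cs => simp

lemma increasing_le {t : LTree} (h : Increasing t) : ∀ y ∈ labels t, rootLabel t ≤ y := by
  induction h with
  | node a cs hlt hinc ih =>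
    intro y hy
    simp only [labels_node, List.mem_cons] at hy
    rcases hy with rfl | hy
    · simp
    · obtain ⟨c, hc, hyc⟩ := mem_labelsList.mp hy
      have := ih c hc y hyc
      have := hlt c hc
      simp only [rootLabel_node]
      omega

lemma increasing_lt {a : ℕ} {cs : List LTree} (h : Increasing (node a cs)) :
    ∀ y ∈ labelsList cs, a < y := by
  intro y hy
  obtain ⟨c, hc, hyc⟩ := mem_labelsList.mp hy
  cases h with
  | node _ _ hlt hinc =>
    have := increasing_le (hinc c hc) y hyc
    have := hlt c hc
    omega

end SP
namespace SP
open LTree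

lemma word_count : ∀ cs : List LTree, ∀ x : ℕ,
    (word cs).count x = 2 * ((labelsList cs).map (fun y => y - 1)).count x := by
  refine forest_rec (by simp) ?_
  intro a cs rest ihc ihr x
  simp only [word_cons, labelsList_cons, labels_node, List.cons_append, List.map_cons,
    List.map_append, List.count_cons, List.count_append, ihc, ihr]
  by_cases h : ((a - 1 : ℕ) == x) = true <;> simp [h] <;> omega

lemma mem_word {x : ℕ} : ∀ {cs : List LTree},
    x ∈ word cs ↔ ∃ y ∈ labelsList cs, x = y - 1 := by
  have : ∀ cs : List LTree, ∀ x : ℕ, (x ∈ word cs ↔ ∃ y ∈ labelsList cs, x = y - 1) := by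
    refine forest_rec (by simp) ?_
    intro a cs rest ihc ihr x
    simp only [word_cons, labelsList_cons, labels_node, List.cons_append, List.mem_cons,
      List.mem_append, ihc, ihr]
    constructor
    · rintro (rfl | ⟨y, hy, rfl⟩ | rfl | ⟨y, hy, rfl⟩)
      · exact ⟨a, Or.inl rfl, rfl⟩
      · exact ⟨y, Or.inr (Or.inl hy), rfl⟩
      · exact ⟨a, Or.inl rfl, rfl⟩
      · exact ⟨y, Or.inr (Or.inr hy), rfl⟩
    · rintro ⟨y, (rfl | hy | hy), rfl⟩
      · exact Or.inl rfl
      · exact Or.inr (Or.inl ⟨y, hy, rfl⟩)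
      · exact Or.inr (Or.inr (Or.inr ⟨y, hy, rfl⟩))
  exact fun {cs} => this cs x

lemma st_word : ∀ cs : List LTree, (labelsList cs).Nodup →
    (∀ y ∈ labelsList cs, 1 ≤ y) → (∀ c ∈ cs, Increasing c) → St (word cs) := by
  refine forest_rec (by intro _ _ _ p q r _ _ h _; simp at h) ?_
  intro a cs rest ihc ihr hnod hge hinc
  simp only [labelsList_cons, labels_node, List.cons_append] at hnod hge
  rw [List.nodup_cons, List.nodup_append] at hnod
  obtain ⟨hna, hn1, hn2, hdisjl⟩ := hnod
  have ha : 1 ≤ a := hge a (by simp)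
  have hge1 : ∀ y ∈ labelsList cs, 1 ≤ y := fun y hy => hge y (by simp [hy])
  have hge2 : ∀ y ∈ labelsList rest, 1 ≤ y := fun y hy => hge y (by simp [hy])
  have hIa : Increasing (node a cs) := hinc _ (by simp)
  have hlt' : ∀ y ∈ labelsList cs, a < y := increasing_lt hIa
  have hinc1 : ∀ c ∈ cs, Increasing c := by
    cases hIa with | node _ _ _ h => exact h
  have hinc2 : ∀ c ∈ rest, Increasing c := fun c hc => hinc c (by simp [hc])
  rw [word_cons]
  apply st_glue (ihc hn1 hge1 hinc1) (ihr hn2 hge2 hinc2)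
  · rw [mem_word]; rintro ⟨y, hy, hxy⟩
    have := hlt' y hy; omega
  · rw [mem_word]; rintro ⟨y, hy, hxy⟩
    have := hge2 y hy
    have : a = y := by omega
    exact hna (by simp [this, hy])
  · intro x hx
    rw [mem_word] at hx; obtain ⟨y, hy, rfl⟩ := hx
    have := hlt' y hy; omega
  · intro x hx1 hx2
    rw [mem_word] at hx1 hx2
    obtain ⟨y1, hy1, rfl⟩ := hx1
    obtain ⟨y2, hy2, h12⟩ := hx2
    have := hge1 y1 hy1
    have := hge2 y2 hy2
    have : y1 = y2 := by omega
    exact hdisjl y1 hy1 y2 hy2 this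

lemma blockCount_word : ∀ cs : List LTree, (labelsList cs).Nodup →
    (∀ y ∈ labelsList cs, 1 ≤ y) → blockCount (word cs) = cs.length := by
  refine forest_rec (by intro _ _; simp [blockCount_nil]) ?_
  intro a cs rest ihc ihr hnod hge
  simp only [labelsList_cons, labels_node, List.cons_append] at hnod hge
  rw [List.nodup_cons, List.nodup_append] at hnod
  obtain ⟨hna, hn1, hn2, hdisjl⟩ := hnod
  have ha : 1 ≤ a := hge a (by simp)
  have hge1 : ∀ y ∈ labelsList cs, 1 ≤ y := fun y hy => hge y (by simp [hy])
  have hge2 : ∀ y ∈ labelsList rest, 1 ≤ y := fun y hy => hge y (by simp [hy])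
  have hb1 : (a - 1) ∉ word cs := by
    rw [mem_word]; rintro ⟨y, hy, hxy⟩
    have := hge1 y hy
    have : a = y := by omega
    exact hna (by simp [this, hy])
  have hb2 : (a - 1) ∉ word rest := by
    rw [mem_word]; rintro ⟨y, hy, hxy⟩
    have := hge2 y hy
    have : a = y := by omega
    exact hna (by simp [this, hy])
  have hd : ∀ x ∈ word cs, x ∉ word rest := by
    intro x hx1 hx2
    rw [mem_word] at hx1 hx2
    obtain ⟨y1, hy1, rfl⟩ := hx1
    obtain ⟨y2, hy2, h12⟩ := hx2
    have := hge1 y1 hy1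
    have := hge2 y2 hy2
    have : y1 = y2 := by omega
    exact hdisjl y1 hy1 y2 hy2 this
  rw [word_cons, ← List.cons_append, blockCount_glue hb1 hb2 hd, ihr hn2 hge2]
  simp

end SP
namespace SP
open LTree

lemma not_mem_take_indexOf (b : ℕ) : ∀ l : List ℕ, b ∉ l.take (l.idxOf b) := by
  intro l
  induction l with
  | nil => simp
  | cons a t ih =>
    by_cases h : a = b
    · simp [List.idxOf_cons, h]
    · simp only [List.idxOf_cons, show (a == b) = false by simp [h], cond_false,
        List.take_succ_cons, List.mem_cons]
      rintro (rfl | hmem)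
      · exact h rfl
      · exact ih hmem

lemma indexOf_append_cons {b : ℕ} : ∀ {l1 : List ℕ} (l2 : List ℕ), b ∉ l1 →
    (l1 ++ b :: l2).idxOf b = l1.length := by
  intro l1
  induction l1 with
  | nil => intro l2 _; simp [List.idxOf_cons]
  | cons a t ih =>
    intro l2 h
    simp only [List.mem_cons, not_or] at h
    have : (a == b) = false := by simp; exact fun hh => h.1 hh.symm
    simp only [List.cons_append, List.idxOf_cons, this, cond_false, ih l2 h.2,
      List.length_cons]

lemma drop_append_cons {b : ℕ} (l1 l2 : List ℕ) :
    (l1 ++ b :: l2).drop (l1.length + 1) = l2 := by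
  have : l1 ++ b :: l2 = (l1 ++ [b]) ++ l2 := by simp
  rw [this, show l1.length + 1 = (l1 ++ [b]).length by simp, List.drop_left]

lemma take_append_cons {b : ℕ} (l1 l2 : List ℕ) :
    (l1 ++ b :: l2).take l1.length = l1 := List.take_left

lemma parse_word : ∀ cs : List LTree, (labelsList cs).Nodup →
    (∀ y ∈ labelsList cs, 1 ≤ y) → parse (word cs) = cs := by
  refine forest_rec (by simp) ?_
  intro a cs rest ihc ihr hnod hge
  simp only [labelsList_cons, labels_node, List.cons_append] at hnod hge
  rw [List.nodup_cons, List.nodup_append] at hnod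
  obtain ⟨hna, hn1, hn2, hdisjl⟩ := hnod
  have ha : 1 ≤ a := hge a (by simp)
  have hge1 : ∀ y ∈ labelsList cs, 1 ≤ y := fun y hy => hge y (by simp [hy])
  have hge2 : ∀ y ∈ labelsList rest, 1 ≤ y := fun y hy => hge y (by simp [hy])
  have hb1 : (a - 1) ∉ word cs := by
    rw [mem_word]; rintro ⟨y, hy, hxy⟩
    have := hge1 y hy
    have : a = y := by omega
    exact hna (by simp [this, hy])
  rw [word_cons, parse_cons, indexOf_append_cons _ hb1, take_append_cons, drop_append_cons,
    ihc hn1 hge1, ihr hn2 hge2]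
  have : a - 1 + 1 = a := by omega
  rw [this]

end SP
namespace SP
open LTree

lemma labels_subset_labelsList {c : LTree} {cs : List LTree} (hc : c ∈ cs) :
    ∀ y ∈ labels c, y ∈ labelsList cs := fun y hy => mem_labelsList.mpr ⟨c, hc, hy⟩

lemma parse_spec : ∀ N : ℕ, ∀ σ : List ℕ, σ.length ≤ N →
    (∀ x ∈ σ, σ.count x = 2) → St σ →
    word (parse σ) = σ ∧
    (∀ x, 2 * ((labelsList (parse σ)).count x) = (σ.map (fun y => y + 1)).count x) ∧
    (∀ t ∈ parse σ, Increasing t) := by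
  intro N
  induction N with
  | zero =>
    intro σ hlen _ _
    have : σ = [] := List.length_eq_zero_iff.mp (Nat.le_zero.mp hlen)
    subst this
    refine ⟨by simp, by simp, by simp⟩
  | succ N IH =>
    intro σ hlen hcount hst
    cases σ with
    | nil => refine ⟨by simp, by simp, by simp⟩
    | cons b rest =>
      have hcb : rest.count b = 1 := by
        have := hcount b (by simp)
        simp [List.count_cons] at this
        omega
      have hbmem : b ∈ rest := by
        by_contra h
        rw [List.count_eq_zero.mpr h] at hcb
        omega
      set j := rest.idxOf b with hj
      have hjlt : j < rest.length := List.idxOf_lt_length_iff.mpr hbmem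
      set w1 := rest.take j with hw1
      set w2 := rest.drop (j + 1) with hw2
      have hdecomp : rest = w1 ++ b :: w2 := by
        conv_lhs => rw [← List.take_append_drop j rest]
        rw [List.drop_eq_getElem_cons hjlt, List.getElem_idxOf hjlt]
      have hb1 : b ∉ w1 := not_mem_take_indexOf b rest
      have hst' : St (b :: w1 ++ b :: w2) := by
        rw [List.cons_append, ← hdecomp]; exact hst
      have hcount' : ∀ x ∈ (b :: w1 ++ b :: w2), (b :: w1 ++ b :: w2).count x = 2 := by
        rw [List.cons_append, ← hdecomp]; exact hcount
      obtain ⟨hst1, hst2, hlt, hdisj, hbw2, hc1, hc2⟩ := st_split hst' hcount' hb1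
      have hlen1 : w1.length ≤ N := by
        have : w1.length ≤ rest.length := by rw [hw1, List.length_take]; omega
        simp only [List.length_cons] at hlen
        omega
      have hlen2 : w2.length ≤ N := by
        have : w2.length ≤ rest.length := by rw [hw2, List.length_drop]; omega
        simp only [List.length_cons] at hlen
        omega
      obtain ⟨ih1a, ih1b, ih1c⟩ := IH w1 hlen1 hc1 hst1
      obtain ⟨ih2a, ih2b, ih2c⟩ := IH w2 hlen2 hc2 hst2
      have hparse : parse (b :: rest) = node (b+1) (parse w1) :: parse w2 := parse_cons b rest
      refine ⟨?_, ?_, ?_⟩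
      · rw [hparse, word_cons, ih1a, ih2a]
        simp only [Nat.add_sub_cancel]
        rw [hdecomp]
      · intro x
        rw [hparse]
        simp only [labelsList_cons, labels_node, List.cons_append, List.count_cons,
          List.count_append, hdecomp, List.map_cons, List.map_append]
        have h1 := ih1b x
        have h2 := ih2b x
        by_cases hx : ((b + 1 : ℕ) == x) = true <;> simp [hx] at * <;> omega
      · rw [hparse]
        intro t ht
        rcases List.mem_cons.mp ht with rfl | ht'
        · refine Increasing.node _ _ ?_ ih1c
          intro c hc
          have hmem : rootLabel c ∈ labelsList (parse w1) :=
            labels_subset_labelsList hc _ (rootLabel_mem_labels c)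
          have hpos : 0 < (labelsList (parse w1)).count (rootLabel c) :=
            List.count_pos_iff.mpr hmem
          have := ih1b (rootLabel c)
          have hmem2 : rootLabel c ∈ w1.map (fun y => y + 1) := by
            rw [← List.count_pos_iff]
            omega
          obtain ⟨y, hy, hyx⟩ := List.mem_map.mp hmem2
          have := hlt y hy
          omega
        · exact ih2c t ht'

end SP
namespace SP
open LTree

lemma map_sub_range' : ∀ n s : ℕ, (List.range' (s+1) n).map (fun y => y - 1) = List.range' s n := by
  intro n
  induction n with
  | zero => intro s; simp
  | succ n ih =>
    intro s
    rw [List.range'_succ, List.range'_succ, List.map_cons, Nat.add_sub_cancel, ih (s+1)]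

lemma root_eq_one {n : ℕ} {a : ℕ} {cs : List LTree} (hL : IsLPT n (node a cs))
    (hI : Increasing (node a cs)) : a = 1 := by
  unfold IsLPT at hL
  have h1mem : (1 : ℕ) ∈ List.range' 1 (n+1) := by
    rw [List.mem_range']; exact ⟨0, by omega, by omega⟩
  have h1 : (1 : ℕ) ∈ labels (node a cs) := hL.mem_iff.mpr h1mem
  have hamem : a ∈ List.range' 1 (n+1) := hL.mem_iff.mp (rootLabel_mem_labels _)
  have ha1 : 1 ≤ a := by
    rw [List.mem_range'] at hamem; omega
  simp only [labels_node, List.mem_cons] at h1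
  rcases h1 with h | h
  · omega
  · have := increasing_lt hI 1 h; omega

lemma children_perm {n : ℕ} {a : ℕ} {cs : List LTree} (hL : IsLPT n (node a cs))
    (hI : Increasing (node a cs)) : (labelsList cs).Perm (List.range' 2 n) := by
  have ha := root_eq_one hL hI
  subst ha
  unfold IsLPT at hL
  rw [labels_node, List.range'_succ] at hL
  exact (List.perm_cons 1).mp hL

lemma word_perm {n : ℕ} {cs : List LTree} (hcs : (labelsList cs).Perm (List.range' 2 n)) :
    (word cs).Perm (List.range' 1 n ++ List.range' 1 n) := by
  rw [List.perm_iff_count]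
  intro x
  rw [word_count, List.count_append]
  have hmap : ((labelsList cs).map (fun y => y - 1)).Perm (List.range' 1 n) := by
    have := hcs.map (fun y => y - 1)
    rwa [map_sub_range' n 1] at this
  rw [hmap.count_eq x]
  omega

/-- Everything needed about the word of an increasing labeled plane tree. -/
lemma word_props {n : ℕ} (T : LTree) (hL : IsLPT n T) (hI : Increasing T) :
    IsStirling n (word (children T)) ∧ blockCount (word (children T)) = rootDeg T ∧
    parse (word (children T)) = children T ∧ rootLabel T = 1 := by
  obtain ⟨a, cs⟩ := T
  have ha : a = 1 := root_eq_one hL hI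
  have hcs : (labelsList cs).Perm (List.range' 2 n) := children_perm hL hI
  have hnod : (labelsList cs).Nodup := hcs.nodup_iff.mpr (List.nodup_range' (s := 2) (n := n))
  have hge : ∀ y ∈ labelsList cs, 1 ≤ y := by
    intro y hy
    have := hcs.mem_iff.mp hy
    rw [List.mem_range'] at this; omega
  have hinc : ∀ c ∈ cs, Increasing c := by
    cases hI with | node _ _ _ h => exact h
  refine ⟨⟨word_perm hcs, st_word cs hnod hge hinc⟩, ?_, ?_, ?_⟩
  · rw [children_node, blockCount_word cs hnod hge]; rfl
  · rw [children_node, parse_word cs hnod hge]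
  · simpa using ha

end SP
namespace SP
open LTree

/-- Everything needed about the parse of a Stirling permutation. -/
lemma parse_props {n : ℕ} (σ : List ℕ) (hS : IsStirling n σ) :
    word (children (node 1 (parse σ))) = σ ∧
    IsLPT n (node 1 (parse σ)) ∧ Increasing (node 1 (parse σ)) ∧
    rootDeg (node 1 (parse σ)) = blockCount σ := by
  obtain ⟨hperm, hst'⟩ := hS
  have hst : St σ := hst'
  have hnodR : (List.range' 1 n).Nodup := List.nodup_range' (s := 1) (n := n)
  have hcount : ∀ x ∈ σ, σ.count x = 2 := by
    intro x hx
    have hxm : x ∈ List.range' 1 n := by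
      have := hperm.mem_iff.mp hx
      rcases List.mem_append.mp this with h | h <;> exact h
    rw [hperm.count_eq x, List.count_append, List.count_eq_one_of_mem hnodR hxm]
  obtain ⟨hwp, hcnt, hincr⟩ := parse_spec σ.length σ le_rfl hcount hst
  set cs := parse σ with hcs
  have hlabperm : (labelsList cs).Perm (List.range' 2 n) := by
    rw [List.perm_iff_count]
    intro x
    have h1 := hcnt x
    have h2 : (σ.map (fun y => y + 1)).count x
        = ((List.range' 1 n ++ List.range' 1 n).map (fun y => y + 1)).count x :=
      (hperm.map (fun y => y + 1)).count_eq x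
    have h3 : (List.range' 1 n).map (fun y => y + 1) = List.range' 2 n := by
      have := List.map_add_range' (a := 1) 1 n 1
      simpa [Nat.add_comm] using this
    rw [List.map_append, h3, List.count_append] at h2
    omega
  have hge : ∀ y ∈ labelsList cs, 2 ≤ y := by
    intro y hy
    have := hlabperm.mem_iff.mp hy
    rw [List.mem_range'] at this; omega
  have hnod : (labelsList cs).Nodup := hlabperm.nodup_iff.mpr (List.nodup_range' (s := 2) (n := n))
  refine ⟨?_, ?_, ?_, ?_⟩
  · rw [children_node]; exact hwp
  · unfold IsLPT
    rw [labels_node, List.range'_succ]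
    exact hlabperm.cons 1
  · refine Increasing.node _ _ ?_ hincr
    intro c hc
    have hmem : rootLabel c ∈ labelsList cs :=
      labels_subset_labelsList hc _ (rootLabel_mem_labels c)
    have := hge _ hmem
    exact this
  · show cs.length = blockCount σ
    rw [← hwp, blockCount_word cs hnod (fun y hy => by have := hge y hy; omega)]

end SP
/-- For every `n ≥ 1` and `1 ≤ r ≤ n`, the number of increasing plane trees with
`n` edges whose root has exactly `r` children equals the number of Stirling
permutations of `{1,1,2,2,…,n,n}` having exactly `r` blocks. -/
theorem card_increasing_eq_card_stirling (n r : ℕ) (hn : 1 ≤ n) (hr1 : 1 ≤ r) (hrn : r ≤ n) :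
    Nat.card {T : LTree // LTree.IsLPT n T ∧ LTree.Increasing T ∧ LTree.rootDeg T = r}
      = Nat.card {σ : List ℕ // IsStirling n σ ∧ blockCount σ = r} := by
  have f : ∀ T : LTree, LTree.IsLPT n T ∧ LTree.Increasing T ∧ LTree.rootDeg T = r →
      IsStirling n (SP.word T.children) ∧ blockCount (SP.word T.children) = r := by
    rintro T ⟨hL, hI, hD⟩
    obtain ⟨h1, h2, h3, h4⟩ := SP.word_props T hL hI
    exact ⟨h1, by rw [h2, hD]⟩
  refine Nat.card_eq_of_bijective (fun x => ⟨SP.word x.1.children, f x.1 x.2⟩) ⟨?_, ?_⟩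
  · rintro ⟨T1, h1⟩ ⟨T2, h2⟩ heq
    simp only [Subtype.mk.injEq] at heq ⊢
    obtain ⟨-, -, hp1, hr1⟩ := SP.word_props T1 h1.1 h1.2.1
    obtain ⟨-, -, hp2, hr2⟩ := SP.word_props T2 h2.1 h2.2.1
    have e1 : T1 = LTree.node (LTree.rootLabel T1) (LTree.children T1) := by cases T1; rfl
    have e2 : T2 = LTree.node (LTree.rootLabel T2) (LTree.children T2) := by cases T2; rfl
    rw [e1, e2, hr1, hr2, ← hp1, ← hp2, heq]
  · rintro ⟨σ, hS, hB⟩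
    obtain ⟨h1, h2, h3, h4⟩ := SP.parse_props σ hS
    exact ⟨⟨LTree.node 1 (SP.parse σ), h2, h3, by rw [h4, hB]⟩, Subtype.ext h1⟩
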